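/- (Semi-Rigidity Theorem) Let B be a domain that is either an affine k-domain or finitely generated as a ring. Then B is rigid (admits no nontrivial exponential map) if and only if ML(B^[1]) = B, where B^[1] = B[X] is the polynomial ring in one variable over B. -/

import Mathlib

open Polynomial

variable (k : Type) [Field k] (B : Type) [CommRing B] [IsDomain B] [Algebra k B]

/-- An exponential map on a `k`-domain `B`. -/
def IsExpMap (δ : B →ₐ[k] B[X]) : Prop :=
  (∀ b : B, (δ b).eval 0 = b) ∧
  (∀ b : B, (δ b).map δ.toRingHom = (δ b).eval₂ (C.comp C) (C X + X))

/-- The trivial exponential map property. -/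
def IsTrivialExp (δ : B →ₐ[k] B[X]) : Prop := ∀ b : B, δ b = C b

/-- The ring of δ-invariants, as a subalgebra. -/
noncomputable def expInv (δ : B →ₐ[k] B[X]) : Subalgebra k B :=
  AlgHom.equalizer δ CAlgHom

/-- A local slice: an element of minimal positive δ-degree. -/
def IsLocalSlice (δ : B →ₐ[k] B[X]) (x : B) : Prop :=
  0 < (δ x).degree ∧ ∀ y : B, 0 < (δ y).degree → (δ x).degree ≤ (δ y).degree

/-- A slice: a local slice whose top iterative derivative is a unit. -/
def IsSlice (δ : B →ₐ[k] B[X]) (x : B) : Prop :=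
  IsLocalSlice k B δ x ∧ IsUnit ((δ x).coeff (δ x).natDegree)

/-- δ admits a slice. -/
def HasSlice (δ : B →ₐ[k] B[X]) : Prop := ∃ x : B, IsSlice k B δ x

/-- Makar-Limanov invariant. -/
noncomputable def ML : Subalgebra k B :=
  ⨅ δ ∈ {δ : B →ₐ[k] B[X] | IsExpMap k B δ}, expInv k B δ

/-- Makar-Limanov–Freudenburg invariant. -/
noncomputable def MLstar : Subalgebra k B :=
  ⨅ δ ∈ {δ : B →ₐ[k] B[X] | IsExpMap k B δ ∧ HasSlice k B δ}, expInv k B δ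

/-- Rigidity: every exponential map is trivial. -/
def IsRigid : Prop := ∀ δ : B →ₐ[k] B[X], IsExpMap k B δ → IsTrivialExp k B δ

/-- `B` has transcendence degree `n` over `k`. -/
def HasTrdeg (n : ℕ) : Prop := ∃ x : Fin n → B, IsTranscendenceBasis k x


namespace SemiRigidAux


variable {R : Type*} [CommRing R]

/-- Coefficients of the comultiplication `u ↦ u(S+T)`. -/
lemma coeffA (u : R[X]) (i j : ℕ) :
    ((u.eval₂ (C.comp C : R →+* R[X][X]) (C X + X)).coeff i).coeff j
      = (i + j).choose i • u.coeff (i + j) := by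
  rw [eval₂_eq_sum, Polynomial.sum_def, finset_sum_coeff, finset_sum_coeff]
  have hterm : ∀ e : ℕ,
      ((((C.comp C : R →+* R[X][X]) (u.coeff e)) * (C X + X) ^ e).coeff i).coeff j
        = u.coeff e * ((e.choose i : R) * (if e - i = j ∧ i ≤ e then 1 else 0)) := by
    intro e
    rw [RingHom.comp_apply, add_comm (C X) X, coeff_C_mul, coeff_X_add_C_pow, coeff_C_mul]
    congr 1
    rw [← C_eq_natCast, mul_comm, coeff_C_mul, coeff_X_pow]
    by_cases hie : i ≤ e
    · by_cases hj : e - i = j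
      · simp [hj, hie]
      · simp only [hj, if_false, and_true, hie, mul_zero]
        rw [if_neg (fun h => hj h.symm), mul_zero]
    · push_neg at hie
      rw [Nat.choose_eq_zero_of_lt hie]
      simp [hie]
  simp only [hterm]
  rw [Finset.sum_eq_single (i + j)]
  · simp [Nat.le_add_right, nsmul_eq_mul, mul_comm]
  · intro e _ hne
    rcases Nat.lt_or_ge e i with h | h
    · rw [Nat.choose_eq_zero_of_lt h]; simp
    · have : ¬(e - i = j ∧ i ≤ e) := by
        rintro ⟨h1, _⟩
        exact hne (by omega)
      simp [this]
  · intro h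
    simp [notMem_support_iff.mp h]


section Extraction

variable {B : Type*} [CommRing B] (M N : ℕ)

/-- Extraction of the coefficient of `u : B[X][T]` on the weight line of level `a`:
the coefficient of `X^((a+M*j)/N) * T^j`. -/
noncomputable def extc (a : ℕ) (u : B[X][X]) (j : ℕ) : B :=
  if N ∣ (a + M * j) then (u.coeff j).coeff ((a + M * j) / N) else 0

/-- Weight bound: all monomials `X^t T^j` of `u` satisfy `N*t ≤ a + M*j`. -/
def wbd (a : ℕ) (u : B[X][X]) : Prop :=
  ∀ j t, a + M * j < N * t → (u.coeff j).coeff t = 0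

variable {M N}

lemma nmul_lt {N s t : ℕ} (hN : 0 < N) (h : s < t) : N * s < N * t := by
  have h1 : N * (s + 1) ≤ N * t := Nat.mul_le_mul_left N h
  rw [Nat.mul_succ] at h1
  omega

lemma extc_zero_poly (a j : ℕ) : extc M N a (0 : B[X][X]) j = 0 := by
  simp [extc]

lemma extc_add (a : ℕ) (u v : B[X][X]) (j : ℕ) :
    extc M N a (u + v) j = extc M N a u j + extc M N a v j := by
  simp only [extc]
  split <;> simp

lemma wbd_mul {a a' : ℕ} {u v : B[X][X]} (hu : wbd M N a u) (hv : wbd M N a' v) :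
    wbd M N (a + a') (u * v) := by
  intro j t h
  rw [coeff_mul, finset_sum_coeff]
  apply Finset.sum_eq_zero
  rintro ⟨j1, j2⟩ hmem
  rw [Finset.HasAntidiagonal.mem_antidiagonal] at hmem
  rw [coeff_mul]
  apply Finset.sum_eq_zero
  rintro ⟨t1, t2⟩ hmem2
  rw [Finset.HasAntidiagonal.mem_antidiagonal] at hmem2
  have e1 : M * j = M * j1 + M * j2 := by rw [← hmem, Nat.mul_add]
  have e2 : N * t = N * t1 + N * t2 := by rw [← hmem2, Nat.mul_add]
  rcases Nat.lt_or_ge (a + M * j1) (N * t1) with h1 | h1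
  · rw [hu j1 t1 h1, zero_mul]
  · rw [hv j2 t2 (by omega), mul_zero]

lemma extc_eq_zero_of_lt {a a' : ℕ} {u : B[X][X]} (hu : wbd M N a u) (h : a < a') (j : ℕ) :
    extc M N a' u j = 0 := by
  simp only [extc]
  split
  · next hdvd =>
    obtain ⟨T, hT⟩ := hdvd
    rcases Nat.eq_zero_or_pos N with rfl | hN
    · exfalso; omega
    · have hdiv : (a' + M * j) / N = T := by rw [hT, Nat.mul_div_cancel_left _ hN]
      rw [hdiv]
      exact hu j T (by omega)
  · rfl

lemma extc_mul (hN : 0 < N) {a a' : ℕ} {u v : B[X][X]} (hu : wbd M N a u) (hv : wbd M N a' v)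
    (j : ℕ) :
    extc M N (a + a') (u * v) j
      = ∑ p ∈ Finset.HasAntidiagonal.antidiagonal j, extc M N a u p.1 * extc M N a' v p.2 := by
  by_cases hdvd : N ∣ (a + a' + M * j)
  · obtain ⟨T, hT⟩ := hdvd
    have hL : extc M N (a + a') (u * v) j = ((u * v).coeff j).coeff T := by
      simp only [extc]
      rw [if_pos ⟨T, hT⟩, hT, Nat.mul_div_cancel_left _ hN]
    rw [hL, coeff_mul, finset_sum_coeff]
    apply Finset.sum_congr rfl
    rintro ⟨j1, j2⟩ hmem
    rw [Finset.HasAntidiagonal.mem_antidiagonal] at hmem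
    have e1 : M * j = M * j1 + M * j2 := by rw [← hmem, Nat.mul_add]
    rw [coeff_mul]
    by_cases h1 : N ∣ (a + M * j1)
    · have h2 : N ∣ (a' + M * j2) := by
        have he : a' + M * j2 = N * T - (a + M * j1) := by omega
        rw [he]
        exact Nat.dvd_sub (Dvd.intro T rfl) h1
      obtain ⟨s1, hs1⟩ := h1
      obtain ⟨s2, hs2⟩ := h2
      have hsum : s1 + s2 = T := by
        have hh : N * (s1 + s2) = N * T := by rw [Nat.mul_add]; omega
        exact Nat.eq_of_mul_eq_mul_left hN hh
      rw [Finset.sum_eq_single (s1, s2)]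
      · simp only [extc]
        rw [if_pos ⟨s1, hs1⟩, if_pos ⟨s2, hs2⟩, hs1, hs2,
          Nat.mul_div_cancel_left _ hN, Nat.mul_div_cancel_left _ hN]
      · rintro ⟨t1, t2⟩ hm hne
        rw [Finset.HasAntidiagonal.mem_antidiagonal] at hm
        rcases Nat.lt_or_ge s1 t1 with hgt | hle
        · rw [hu j1 t1 (by rw [hs1]; exact nmul_lt hN hgt), zero_mul]
        · have hs2t : s2 < t2 := by
            rcases Nat.lt_or_ge t1 s1 with hh | hh
            · omega
            · have ht1 : t1 = s1 := le_antisymm hle hh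
              have ht2 : t2 ≠ s2 := by
                intro ht2
                exact hne (by rw [ht1, ht2])
              omega
          rw [hv j2 t2 (by rw [hs2]; exact nmul_lt hN hs2t), mul_zero]
      · intro hnot
        exact absurd (Finset.HasAntidiagonal.mem_antidiagonal.mpr hsum) hnot
    · have hR : extc M N a u j1 * extc M N a' v j2 = 0 := by
        simp only [extc]; rw [if_neg h1, zero_mul]
      rw [hR]
      apply Finset.sum_eq_zero
      rintro ⟨t1, t2⟩ hm
      rw [Finset.HasAntidiagonal.mem_antidiagonal] at hm
      rcases Nat.lt_or_ge (a + M * j1) (N * t1) with hgt | hle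
      · rw [hu j1 t1 hgt, zero_mul]
      · rcases Nat.lt_or_ge (a' + M * j2) (N * t2) with hgt2 | hle2
        · rw [hv j2 t2 hgt2, mul_zero]
        · exfalso
          have e2 : N * t1 + N * t2 = N * T := by rw [← Nat.mul_add, hm]
          exact h1 ⟨t1, by omega⟩
  · simp only [extc]
    rw [if_neg hdvd]
    symm
    apply Finset.sum_eq_zero
    rintro ⟨j1, j2⟩ hmem
    rw [Finset.HasAntidiagonal.mem_antidiagonal] at hmem
    by_cases h1 : N ∣ (a + M * j1)
    · by_cases h2 : N ∣ (a' + M * j2)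
      · exfalso
        apply hdvd
        have e1 : a + M * j1 + (a' + M * j2) = a + a' + M * j := by
          have : M * j = M * j1 + M * j2 := by rw [← hmem, Nat.mul_add]
          omega
        rw [← e1]
        exact dvd_add h1 h2
      · rw [if_neg h2, mul_zero]
    · rw [if_neg h1, zero_mul]


lemma extc_coeff_high {a j : ℕ} {u : B[X][X]} (h : u.coeff j = 0) : extc M N a u j = 0 := by
  simp [extc, h]

lemma extc_finset_sum {ι : Type*} (s : Finset ι) (f : ι → B[X][X]) (a j : ℕ) :
    extc M N a (∑ i ∈ s, f i) j = ∑ i ∈ s, extc M N a (f i) j := by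
  classical
  induction s using Finset.induction with
  | empty => simp [extc_zero_poly]
  | insert _ _ h ih => rw [Finset.sum_insert h, Finset.sum_insert h, extc_add, ih]

end Extraction

section Helpers
variable {B : Type*} [CommRing B]

lemma coeff_sum_CX {n : ℕ} {f : ℕ → B} (l : ℕ) :
    (∑ i ∈ Finset.range n, C (f i) * X ^ i).coeff l = if l < n then f l else 0 := by
  rw [finset_sum_coeff]
  by_cases hl : l < n
  · rw [if_pos hl,
      Finset.sum_eq_single l (fun i _ hne => by simp [coeff_C_mul, coeff_X_pow, Ne.symm hne])
        (fun h => absurd (Finset.mem_range.mpr hl) h)]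
    simp [coeff_C_mul, coeff_X_pow]
  · rw [if_neg hl]
    apply Finset.sum_eq_zero
    intro i hi
    rw [Finset.mem_range] at hi
    have hne : l ≠ i := by omega
    simp [coeff_C_mul, coeff_X_pow, hne]

end Helpers

section ExpMachinery
variable {k : Type} [Field k] {B : Type} [CommRing B] [Algebra k B]
variable (Δ : B[X] →ₐ[k] (B[X])[X]) (M N : ℕ)

noncomputable def xe (l : ℕ) : B := extc M N N (Δ X) l

noncomputable def cc (b : B) (i : ℕ) : B := extc M N 0 (Δ (C b)) i

noncomputable def Hpoly : B[X] :=
  ∑ l ∈ Finset.range ((Δ X).natDegree + 1), C (xe Δ M N l) * X ^ l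

noncomputable def ds (b : B) : B[X] :=
  ∑ i ∈ Finset.range ((Δ (C b)).natDegree + 1), C (cc Δ M N b i) * X ^ i

lemma Hpoly_coeff (l : ℕ) : (Hpoly Δ M N).coeff l = xe Δ M N l := by
  rw [Hpoly, coeff_sum_CX]
  split
  · rfl
  · next h =>
    rw [Nat.not_lt] at h
    exact (extc_coeff_high (coeff_eq_zero_of_natDegree_lt (by omega))).symm

lemma ds_coeff (b : B) (i : ℕ) : (ds Δ M N b).coeff i = cc Δ M N b i := by
  rw [ds, coeff_sum_CX]
  split
  · rfl
  · next h =>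
    rw [Nat.not_lt] at h
    exact (extc_coeff_high (coeff_eq_zero_of_natDegree_lt (by omega))).symm

lemma idd (hΔ : IsExpMap k B[X] Δ) (p : B[X]) (i j : ℕ) :
    (Δ ((Δ p).coeff i)).coeff j = (i + j).choose i • (Δ p).coeff (i + j) := by
  have h2 := congrArg (fun q : B[X][X][X] => (q.coeff i).coeff j) (hΔ.2 p)
  simp only [coeff_map] at h2
  rw [coeffA] at h2
  exact h2

lemma qc_zero (hΔ : IsExpMap k B[X] Δ) (p : B[X]) : (Δ p).coeff 0 = p := by
  have h := hΔ.1 p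
  rwa [← coeff_zero_eq_eval_zero] at h

lemma delta_expand (p : B[X]) :
    Δ p = ∑ m ∈ Finset.range (p.natDegree + 1), Δ (C (p.coeff m)) * (Δ X) ^ m := by
  conv_lhs => rw [p.as_sum_range' (p.natDegree + 1) (Nat.lt_succ_self _)]
  rw [map_sum]
  apply Finset.sum_congr rfl
  intro m _
  rw [← C_mul_X_pow_eq_monomial, map_mul, map_pow]

variable {Δ M N}

lemma wbd_pow (hX : wbd M N N (Δ X)) (m : ℕ) : wbd M N (N * m) ((Δ X) ^ m) := by
  induction m with
  | zero =>
    intro j t h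
    rw [Nat.mul_zero] at h
    rw [pow_zero, coeff_one]
    by_cases hj : j = 0
    · subst hj
      rw [if_pos rfl, coeff_one, if_neg (show ¬ t = 0 by rintro rfl; omega)]
    · rw [if_neg hj, coeff_zero]
  | succ m ih =>
    have h2 := wbd_mul ih hX
    rw [pow_succ]
    rwa [Nat.mul_succ]

lemma extc_pow (hN : 0 < N) (hX : wbd M N N (Δ X)) (m j : ℕ) :
    extc M N (N * m) ((Δ X) ^ m) j = ((Hpoly Δ M N) ^ m).coeff j := by
  induction m generalizing j with
  | zero =>
    rw [pow_zero, pow_zero, Nat.mul_zero]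
    simp only [extc, coeff_one]
    by_cases hj : j = 0 <;> simp [hj, coeff_one, Nat.zero_div]
  | succ m ih =>
    rw [pow_succ, show N * (m + 1) = N * m + N from Nat.mul_succ N m,
      extc_mul hN (wbd_pow hX m) hX j, pow_succ, coeff_mul]
    apply Finset.sum_congr rfl
    rintro ⟨j1, j2⟩ _
    rw [ih j1, Hpoly_coeff]
    rfl

lemma masterG (hN : 0 < N) (hB : ∀ b : B, wbd M N 0 (Δ (C b))) (hX : wbd M N N (Δ X))
    (p : B[X]) (a : ℕ) (hpa : ∀ m, a < N * m → p.coeff m = 0) (j : ℕ) :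
    extc M N a (Δ p) j
      = (if N ∣ a then ds Δ M N (p.coeff (a / N)) * (Hpoly Δ M N) ^ (a / N)
          else 0).coeff j := by
  rw [delta_expand Δ p, extc_finset_sum]
  by_cases hdvd : N ∣ a
  · obtain ⟨m0, hm0⟩ := hdvd
    have hm0' : a / N = m0 := by rw [hm0, Nat.mul_div_cancel_left _ hN]
    rw [if_pos ⟨m0, hm0⟩, hm0']
    rw [Finset.sum_eq_single m0]
    · have ha : a = 0 + N * m0 := by omega
      rw [ha, extc_mul hN (hB _) (wbd_pow hX m0) j, coeff_mul]
      apply Finset.sum_congr rfl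
      rintro ⟨j1, j2⟩ _
      rw [extc_pow hN hX, ds_coeff]
      rfl
    · intro m hm hne
      rcases Nat.lt_or_ge a (N * m) with hlt | hge
      · rw [hpa m hlt]
        simp [extc_zero_poly]
      · have hlt2 : N * m < a := by
          rcases Nat.lt_or_ge m m0 with h1 | h1
          · rw [hm0]; exact nmul_lt hN h1
          · exfalso
            have : m0 < m := by omega
            have := nmul_lt hN this
            omega
        exact extc_eq_zero_of_lt (wbd_mul (hB _) (wbd_pow hX m)) (by omega) j
    · intro hnot
      rw [Finset.mem_range, not_lt] at hnot
      rw [coeff_eq_zero_of_natDegree_lt (by omega : p.natDegree < m0)]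
      simp [extc_zero_poly]
  · rw [if_neg hdvd, coeff_zero]
    apply Finset.sum_eq_zero
    intro m hm
    rcases Nat.lt_or_ge a (N * m) with hlt | hge
    · rw [hpa m hlt]
      simp [extc_zero_poly]
    · rcases Nat.lt_or_ge (N * m) a with hlt2 | hge2
      · exact extc_eq_zero_of_lt (wbd_mul (hB _) (wbd_pow hX m)) (by omega) j
      · exact absurd ⟨m, by omega⟩ hdvd

end ExpMachinery


section ExpCore
variable {k : Type} [Field k] {B : Type} [CommRing B] [Algebra k B]
variable (Δ : B[X] →ₐ[k] (B[X])[X]) (M N : ℕ)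

lemma wbd_add {a : ℕ} {u v : B[X][X]} (hu : wbd M N a u) (hv : wbd M N a v) :
    wbd M N a (u + v) := by
  intro j t h
  rw [coeff_add, coeff_add, hu j t h, hv j t h, add_zero]

lemma extc_CC (u : B[X]) (i : ℕ) :
    extc M N 0 ((C u) : B[X][X]) i = if i = 0 then u.coeff 0 else 0 := by
  simp only [extc, coeff_C]
  by_cases hi : i = 0
  · subst hi
    rw [if_pos (by simp), if_pos rfl, if_pos rfl]
    simp
  · rw [if_neg hi, if_neg hi]
    split <;> simp

lemma cc_coeff_zero (hΔ : IsExpMap k B[X] Δ) (b : B) : cc Δ M N b 0 = b := by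
  simp only [cc, extc]
  rw [if_pos (by simp), qc_zero Δ hΔ]
  simp

lemma cc_add (b b' : B) (i : ℕ) :
    cc Δ M N (b + b') i = cc Δ M N b i + cc Δ M N b' i := by
  simp only [cc]
  rw [C_add, map_add, extc_add]

lemma cc_zero_elt (i : ℕ) : cc Δ M N (0 : B) i = 0 := by
  simp only [cc]
  rw [C_0, map_zero, extc_zero_poly]

lemma cc_mul (hN : 0 < N) (hB : ∀ b : B, wbd M N 0 (Δ (C b))) (b b' : B) (i : ℕ) :
    cc Δ M N (b * b') i
      = ∑ p ∈ Finset.HasAntidiagonal.antidiagonal i, cc Δ M N b p.1 * cc Δ M N b' p.2 := by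
  have h := extc_mul hN (hB b) (hB b') i
  simp only [Nat.add_zero] at h
  simp only [cc]
  rw [C_mul, map_mul]
  exact h

lemma cc_one (i : ℕ) : cc Δ M N (1 : B) i = if i = 0 then 1 else 0 := by
  simp only [cc]
  rw [C_1, map_one]
  have : ((1 : B[X][X])) = C (C 1) := by simp
  rw [this, extc_CC]
  simp

lemma ds_add (b b' : B) : ds Δ M N (b + b') = ds Δ M N b + ds Δ M N b' := by
  apply Polynomial.ext
  intro i
  rw [coeff_add, ds_coeff, ds_coeff, ds_coeff, cc_add]

lemma ds_mul (hN : 0 < N) (hB : ∀ b : B, wbd M N 0 (Δ (C b))) (b b' : B) :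
    ds Δ M N (b * b') = ds Δ M N b * ds Δ M N b' := by
  apply Polynomial.ext
  intro i
  rw [ds_coeff, coeff_mul, cc_mul Δ M N hN hB]
  apply Finset.sum_congr rfl
  rintro ⟨j1, j2⟩ _
  rw [ds_coeff, ds_coeff]

lemma ds_one : ds Δ M N (1 : B) = 1 := by
  apply Polynomial.ext
  intro i
  rw [ds_coeff, cc_one, coeff_one]

lemma ds_zero : ds Δ M N (0 : B) = 0 := by
  apply Polynomial.ext
  intro i
  rw [ds_coeff, cc_zero_elt, coeff_zero]

lemma ds_algebraMap (c : k) :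
    ds Δ M N (algebraMap k B c) = algebraMap k B[X] c := by
  apply Polynomial.ext
  intro i
  rw [ds_coeff, Polynomial.algebraMap_apply, coeff_C]
  simp only [cc]
  have h1 : (C (algebraMap k B c) : B[X]) = algebraMap k B[X] c := by
    rw [Polynomial.algebraMap_apply]
  rw [h1, Δ.commutes, Polynomial.algebraMap_apply, extc_CC]
  split
  · rw [Polynomial.algebraMap_apply, coeff_C]
    simp
  · rfl

lemma xe_zero_eq_one (hΔ : IsExpMap k B[X] Δ) (hN : 0 < N) : xe Δ M N 0 = 1 := by
  simp only [xe, extc]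
  rw [if_pos (by simp), qc_zero Δ hΔ X]
  have h : (N + M * 0) / N = 1 := by simp [Nat.div_self hN]
  rw [h, coeff_X_one]

variable {Δ M N}

lemma extc_idd (hΔ : IsExpMap k B[X] Δ) (b : B) (i j : ℕ) :
    extc M N (M * i) (Δ ((Δ (C b)).coeff i)) j = (i + j).choose i • cc Δ M N b (i + j) := by
  have h3 := idd Δ hΔ (C b) i j
  simp only [extc, h3]
  have e : M * i + M * j = 0 + M * (i + j) := by rw [Nat.mul_add]; omega
  rw [e]
  split
  · next hd2 =>
    have hd2' : N ∣ M * (i + j) := by simpa using hd2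
    rw [coeff_smul]
    congr 1
    simp [cc, extc, hd2']
  · next hd2 =>
    have hd2' : ¬ N ∣ M * (i + j) := by simpa using hd2
    simp [cc, extc, hd2']

section Dom
variable [IsDomain B]

lemma Hpoly_eq_one (hΔ : IsExpMap k B[X] Δ) (hN : 0 < N)
    (hB : ∀ b : B, wbd M N 0 (Δ (C b))) (hX : wbd M N N (Δ X)) :
    Hpoly Δ M N = 1 := by
  by_contra hne
  have h0 : (Hpoly Δ M N).coeff 0 = 1 := by
    rw [Hpoly_coeff]; exact xe_zero_eq_one Δ M N hΔ hN
  have hH0 : Hpoly Δ M N ≠ 0 := fun h => by simp [h] at h0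
  have hnpos : 0 < (Hpoly Δ M N).natDegree := by
    rcases Nat.eq_zero_or_pos (Hpoly Δ M N).natDegree with h | h
    · exact absurd (by rw [eq_C_of_natDegree_eq_zero h, h0, C_1]) hne
    · exact h
  set n := (Hpoly Δ M N).natDegree with hn
  have hlead : xe Δ M N n ≠ 0 := by
    rw [← Hpoly_coeff]
    exact leadingCoeff_ne_zero.mpr hH0
  have hdvd : N ∣ N + M * n := by
    by_contra hd
    exact hlead (by simp [xe, extc, hd])
  have key : ∀ j : ℕ,
      (ds Δ M N (xe Δ M N n) * (Hpoly Δ M N) ^ ((N + M * n) / N)).coeff j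
        = (n + j).choose n • xe Δ M N (n + j) := by
    intro j
    have h1 := masterG hN hB hX ((Δ X).coeff n) (N + M * n) (fun m hm => hX n m hm) j
    rw [if_pos hdvd] at h1
    have h2 : ((Δ X).coeff n).coeff ((N + M * n) / N) = xe Δ M N n := by
      simp [xe, extc, hdvd]
    rw [h2] at h1
    rw [← h1]
    have h3 := idd Δ hΔ X n j
    simp only [extc, h3]
    have e : N + M * n + M * j = N + M * (n + j) := by rw [Nat.mul_add]; omega
    rw [e]
    split
    · next hd2 =>
      rw [coeff_smul]
      congr 1
      simp [xe, extc, hd2]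
    · next hd2 =>
      simp [xe, extc, hd2]
  have heq : ds Δ M N (xe Δ M N n) * (Hpoly Δ M N) ^ ((N + M * n) / N)
      = C (xe Δ M N n) := by
    apply Polynomial.ext
    intro j
    rw [key j, coeff_C]
    rcases Nat.eq_zero_or_pos j with rfl | hj
    · simp
    · rw [if_neg (by omega)]
      have hz : xe Δ M N (n + j) = 0 := by
        rw [← Hpoly_coeff]
        exact coeff_eq_zero_of_natDegree_lt (by omega)
      rw [hz, smul_zero]
  have hds : ds Δ M N (xe Δ M N n) ≠ 0 := by
    intro h
    apply hlead
    have h2 := ds_coeff Δ M N (xe Δ M N n) 0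
    rw [h, coeff_zero] at h2
    rw [cc_coeff_zero Δ M N hΔ] at h2
    exact h2.symm
  have hpow : (Hpoly Δ M N) ^ ((N + M * n) / N) ≠ 0 := pow_ne_zero _ hH0
  have hdeg := natDegree_mul hds hpow
  rw [heq, natDegree_C, natDegree_pow, ← hn] at hdeg
  have he : 0 < (N + M * n) / N := Nat.div_pos (by omega) hN
  have hprod : 1 ≤ ((N + M * n) / N) * n := Nat.mul_le_mul he hnpos
  omega

lemma cc_iter (hΔ : IsExpMap k B[X] Δ) (hN : 0 < N)
    (hB : ∀ b : B, wbd M N 0 (Δ (C b))) (hX : wbd M N N (Δ X)) (b : B) (i j : ℕ) :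
    cc Δ M N (cc Δ M N b i) j = (i + j).choose i • cc Δ M N b (i + j) := by
  have hH := Hpoly_eq_one hΔ hN hB hX
  have h1 := masterG hN hB hX ((Δ (C b)).coeff i) (M * i)
    (fun m hm => hB b i m (by omega)) j
  by_cases hd : N ∣ M * i
  · rw [if_pos hd, hH, one_pow, mul_one, ds_coeff] at h1
    have h2 : ((Δ (C b)).coeff i).coeff (M * i / N) = cc Δ M N b i := by
      simp [cc, extc, hd]
    rw [h2] at h1
    rw [← h1]
    exact extc_idd hΔ b i j
  · have hcb : cc Δ M N b i = 0 := by simp [cc, extc, hd]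
    rw [hcb, cc_zero_elt]
    rw [if_neg hd, coeff_zero] at h1
    rw [extc_idd hΔ b i j] at h1
    exact h1.symm

noncomputable def dstar (hN : 0 < N) (hB : ∀ b : B, wbd M N 0 (Δ (C b))) :
    B →ₐ[k] B[X] :=
  { toFun := ds Δ M N
    map_one' := ds_one Δ M N
    map_mul' := ds_mul Δ M N hN hB
    map_zero' := ds_zero Δ M N
    map_add' := ds_add Δ M N
    commutes' := ds_algebraMap Δ M N }

lemma dstar_apply (hN : 0 < N) (hB : ∀ b : B, wbd M N 0 (Δ (C b))) (b : B) :
    dstar (Δ := Δ) hN hB b = ds Δ M N b := rfl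

lemma dstar_exp (hΔ : IsExpMap k B[X] Δ) (hN : 0 < N)
    (hB : ∀ b : B, wbd M N 0 (Δ (C b))) (hX : wbd M N N (Δ X)) :
    IsExpMap k B (dstar (Δ := Δ) hN hB) := by
  constructor
  · intro b
    rw [← coeff_zero_eq_eval_zero, dstar_apply, ds_coeff, cc_coeff_zero Δ M N hΔ]
  · intro b
    apply Polynomial.ext
    intro i
    apply Polynomial.ext
    intro j
    rw [coeff_map, coeffA]
    show (ds Δ M N ((ds Δ M N b).coeff i)).coeff j = _
    rw [ds_coeff, ds_coeff, cc_iter hΔ hN hB hX]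
    exact congrArg (fun z => (i + j).choose i • z) (ds_coeff Δ M N b (i + j)).symm

end Dom

end ExpCore

section Hard
variable {k : Type} [Field k] {B : Type} [CommRing B] [Algebra k B]
variable (Δ : B[X] →ₐ[k] (B[X])[X])

lemma eq_C_of_coeffs {R : Type*} [CommRing R] {p : R[X]}
    (h : ∀ i, 1 ≤ i → p.coeff i = 0) : p = C (p.coeff 0) := by
  apply Polynomial.ext
  intro n
  cases n with
  | zero => simp
  | succ m => rw [h _ (by omega), coeff_C, if_neg (by omega)]

lemma rat_le_nat {t i m0 i0 : ℕ} (hi : 0 < i) (hi0 : 0 < i0)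
    (h : (t : ℚ) / i ≤ (m0 : ℚ) / i0) : i0 * t ≤ m0 * i := by
  rw [div_le_div_iff₀ (by exact_mod_cast hi) (by exact_mod_cast hi0)] at h
  have h2 : (i0 * t : ℚ) ≤ (m0 * i : ℚ) := by push_cast; linarith
  exact_mod_cast h2

lemma ratX_le_nat {t l M N : ℕ} (hl : 0 < l) (hN : 0 < N)
    (h : ((t : ℚ) - 1) / l ≤ (M : ℚ) / N) : N * t ≤ N + M * l := by
  rw [div_le_div_iff₀ (by exact_mod_cast hl) (by exact_mod_cast hN)] at h
  have h2 : (N * t : ℚ) ≤ (N : ℚ) + M * l := by push_cast; nlinarith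
  exact_mod_cast h2

variable {M N : ℕ}

lemma wbd_zero_poly : wbd M N 0 ((0 : B[X][X])) := by
  intro j t _
  simp

lemma wbd_CC (y : B) : wbd M N 0 ((C (C y)) : B[X][X]) := by
  intro j t h
  rw [coeff_C]
  split
  · next hj =>
    subst hj
    rw [coeff_C, if_neg (by rintro rfl; omega)]
  · rw [coeff_zero]

lemma closure_aux {R0 : Type*} [CommRing R0] [Algebra R0 B]
    (halg : ∀ c : R0, Δ (C (algebraMap R0 B c)) = C (C (algebraMap R0 B c)))
    (s : Finset B) (hs : Algebra.adjoin R0 (↑s : Set B) = ⊤)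
    (hgens : ∀ g ∈ s, wbd M N 0 (Δ (C g))) (b : B) : wbd M N 0 (Δ (C b)) := by
  let Sa : Subalgebra R0 B :=
    { carrier := {b | wbd M N 0 (Δ (C b))}
      mul_mem' := fun {a b} ha hb => by
        show wbd M N 0 (Δ (C (a * b)))
        rw [C_mul, map_mul]
        exact wbd_mul ha hb
      add_mem' := fun {a b} ha hb => by
        show wbd M N 0 (Δ (C (a + b)))
        rw [C_add, map_add]
        exact wbd_add M N ha hb
      one_mem' := by
        show wbd M N 0 (Δ (C 1))
        rw [C_1, map_one]
        have h1 : ((1 : B[X][X])) = C (C 1) := by simp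
        rw [h1]
        exact wbd_CC 1
      zero_mem' := by
        show wbd M N 0 (Δ (C 0))
        rw [C_0, map_zero]
        exact wbd_zero_poly
      algebraMap_mem' := fun c => by
        show wbd M N 0 (Δ (C (algebraMap R0 B c)))
        rw [halg c]
        exact wbd_CC _ }
  have h2 : Algebra.adjoin R0 (↑s : Set B) ≤ Sa :=
    Algebra.adjoin_le (fun g hg => hgens g (Finset.mem_coe.mp hg))
  exact h2 (by rw [hs]; exact Algebra.mem_top)

lemma hard_invariance [IsDomain B]
    (hfg : Algebra.FiniteType k B ∨ Algebra.FiniteType ℤ B)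
    (hrig : IsRigid k B) (hΔ : IsExpMap k B[X] Δ) (b0 : B) :
    Δ (C b0) = C (C b0) := by
  classical
  by_contra hb0
  -- a finite set governing all degree bounds
  obtain ⟨s0, hclosure⟩ : ∃ s0 : Finset B, ∀ M N : ℕ,
      (∀ g ∈ s0, wbd M N 0 (Δ (C g))) → ∀ b : B, wbd M N 0 (Δ (C b)) := by
    rcases hfg with hT | hT
    · obtain ⟨s, hs⟩ := hT.out
      refine ⟨s, fun M N hg b => closure_aux Δ ?_ s hs hg b⟩
      intro c
      rw [← Polynomial.algebraMap_apply, Δ.commutes, Polynomial.algebraMap_apply,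
        Polynomial.algebraMap_apply]
    · obtain ⟨s, hs⟩ := hT.out
      refine ⟨s, fun M N hg b => closure_aux Δ ?_ s hs hg b⟩
      intro c
      simp
  have hex : ∃ i, 1 ≤ i ∧ (Δ (C b0)).coeff i ≠ 0 := by
    by_contra h
    push_neg at h
    apply hb0
    have h2 := eq_C_of_coeffs (p := Δ (C b0)) (fun i hi => h i hi)
    rwa [qc_zero Δ hΔ] at h2
  obtain ⟨i1, hi1, hcoeff1⟩ := hex
  have hm1 : ((Δ (C b0)).coeff i1).coeff ((Δ (C b0)).coeff i1).natDegree ≠ 0 :=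
    leadingCoeff_ne_zero.mpr hcoeff1
  set m1 := ((Δ (C b0)).coeff i1).natDegree with hm1def
  set gens : Finset B := insert b0 s0 with hgensdef
  -- finite set of B-slope points
  set IB := (gens.sup (fun g => (Δ (C g)).natDegree)) + 1 with hIB
  set TB := (gens.sup (fun g =>
      (Finset.range IB).sup (fun i => ((Δ (C g)).coeff i).natDegree))) + 1 with hTB
  set PB := (Finset.range IB ×ˢ Finset.range TB).filter
      (fun p => 1 ≤ p.1 ∧ ∃ g ∈ gens, ((Δ (C g)).coeff p.1).coeff p.2 ≠ 0) with hPBdef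
  have hPBmem : ∀ i m, 1 ≤ i → (∃ g ∈ gens, ((Δ (C g)).coeff i).coeff m ≠ 0) →
      (i, m) ∈ PB := by
    rintro i m hi ⟨g, hg, hne⟩
    apply Finset.mem_filter.mpr
    have h1 : (Δ (C g)).coeff i ≠ 0 := fun h => hne (by rw [h]; simp)
    have h2 : i ≤ (Δ (C g)).natDegree := le_natDegree_of_ne_zero h1
    have h3 := Finset.le_sup (f := fun g => (Δ (C g)).natDegree) hg
    have hiIB : i ∈ Finset.range IB := Finset.mem_range.mpr (by omega)
    refine ⟨Finset.mem_product.mpr ⟨hiIB, ?_⟩, hi, g, hg, hne⟩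
    rw [Finset.mem_range]
    have h4 : m ≤ ((Δ (C g)).coeff i).natDegree := le_natDegree_of_ne_zero hne
    have h5 := Finset.le_sup (f := fun i => ((Δ (C g)).coeff i).natDegree) hiIB
    have h6 := Finset.le_sup
      (f := fun g => (Finset.range IB).sup (fun i => ((Δ (C g)).coeff i).natDegree)) hg
    omega
  -- finite set of X-slope points
  set LX := (Δ (X : B[X])).natDegree + 1 with hLX
  set TX := ((Finset.range LX).sup (fun l => ((Δ (X : B[X])).coeff l).natDegree)) + 1 with hTX
  set PX := (Finset.range LX ×ˢ Finset.range TX).filter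
      (fun p => 1 ≤ p.1 ∧ ((Δ (X : B[X])).coeff p.1).coeff p.2 ≠ 0) with hPXdef
  have hPXmem : ∀ l t, 1 ≤ l → ((Δ (X : B[X])).coeff l).coeff t ≠ 0 → (l, t) ∈ PX := by
    intro l t hl hne
    apply Finset.mem_filter.mpr
    have h1 : (Δ (X : B[X])).coeff l ≠ 0 := fun h => hne (by rw [h]; simp)
    have h2 : l ≤ (Δ (X : B[X])).natDegree := le_natDegree_of_ne_zero h1
    have hlLX : l ∈ Finset.range LX := Finset.mem_range.mpr (by omega)
    refine ⟨Finset.mem_product.mpr ⟨hlLX, ?_⟩, hl, hne⟩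
    rw [Finset.mem_range]
    have h4 : t ≤ ((Δ (X : B[X])).coeff l).natDegree := le_natDegree_of_ne_zero hne
    have h5 := Finset.le_sup (f := fun l => ((Δ (X : B[X])).coeff l).natDegree) hlLX
    omega
  have hPBne : PB.Nonempty := ⟨(i1, m1), hPBmem i1 m1 hi1 ⟨b0, Finset.mem_insert_self _ _, hm1⟩⟩
  obtain ⟨p0, hp0mem, hp0max⟩ :=
    PB.exists_max_image (fun p : ℕ × ℕ => (p.2 : ℚ) / p.1) hPBne
  obtain ⟨hp0prod, hp0one, g0, hg0, hg0ne⟩ := Finset.mem_filter.mp hp0mem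
  have hfb0 : 0 ≤ (p0.2 : ℚ) / p0.1 := div_nonneg (Nat.cast_nonneg _) (Nat.cast_nonneg _)
  by_cases hc : ∃ p ∈ PX, (p0.2 : ℚ) / p0.1 < ((p.2 : ℚ) - 1) / p.1
  · -- the X-slope dominates strictly: impossible
    obtain ⟨pc, hpc, hltc⟩ := hc
    obtain ⟨q0, hq0mem, hq0max⟩ :=
      PX.exists_max_image (fun p : ℕ × ℕ => ((p.2 : ℚ) - 1) / p.1) ⟨pc, hpc⟩
    obtain ⟨hq0prod, hq0one, hq0ne⟩ := Finset.mem_filter.mp hq0mem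
    have hq0lt : (p0.2 : ℚ) / p0.1 < ((q0.2 : ℚ) - 1) / q0.1 :=
      lt_of_lt_of_le hltc (hq0max pc hpc)
    set N := q0.1 with hNdef
    set M := q0.2 - 1 with hMdef
    have hN : 0 < N := hq0one
    have ht1 : 1 ≤ q0.2 := by
      by_contra hcon
      have hq2 : q0.2 = 0 := by omega
      rw [hq2] at hq0lt
      have hneg : ((0 : ℚ) - 1) / (q0.1 : ℚ) < 0 :=
        div_neg_of_neg_of_pos (by norm_num) (by exact_mod_cast hN)
      push_cast at hq0lt
      linarith
    have hMcast : (M : ℚ) = (q0.2 : ℚ) - 1 := by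
      rw [hMdef]
      push_cast [Nat.cast_sub ht1]
      ring
    have hBgens : ∀ g ∈ gens, wbd M N 0 (Δ (C g)) := by
      intro g hg j t h
      by_contra hne
      rcases Nat.eq_zero_or_pos j with rfl | hj
      · rw [qc_zero Δ hΔ] at hne
        have ht0 : t ≠ 0 := by rintro rfl; omega
        exact hne (by rw [coeff_C, if_neg ht0])
      · have hmem := hPBmem j t hj ⟨g, hg, hne⟩
        have hle := hp0max _ hmem
        have hlt2 : (t : ℚ) / j ≤ (M : ℚ) / N := by
          rw [hMcast]
          exact le_of_lt (lt_of_le_of_lt hle hq0lt)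
        have hfin := rat_le_nat hj hN hlt2
        omega
    have hBall := hclosure M N (fun g hg => hBgens g (Finset.mem_insert_of_mem hg))
    have hXB : wbd M N N (Δ X) := by
      intro l t h
      by_contra hne
      rcases Nat.eq_zero_or_pos l with rfl | hl
      · rw [qc_zero Δ hΔ X] at hne
        have ht0 : t = 1 := by
          by_contra ht
          exact hne (by rw [coeff_X, if_neg (fun hh => ht hh.symm)])
        subst ht0
        omega
      · have hmem := hPXmem l t hl hne
        have hle := hq0max _ hmem
        have hle2 : ((t : ℚ) - 1) / l ≤ (M : ℚ) / N := by rw [hMcast]; exact hle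
        have hfin := ratX_le_nat hl hN hle2
        omega
    have hH := Hpoly_eq_one hΔ hN hBall hXB
    have hxe : xe Δ M N N ≠ 0 := by
      have hd : N ∣ N + M * N := ⟨1 + M, by ring⟩
      simp only [xe, extc]
      rw [if_pos hd]
      have hq : (N + M * N) / N = 1 + M := by
        rw [show N + M * N = N * (1 + M) by ring, Nat.mul_div_cancel_left _ hN]
      rw [hq]
      have ht : 1 + M = q0.2 := by omega
      rw [ht]
      exact hq0ne
    apply hxe
    rw [← Hpoly_coeff, hH, coeff_one, if_neg (by omega)]
  · -- the B-slope dominates: produce a nontrivial exponential map on B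
    push_neg at hc
    set N := p0.1 with hNdef
    set M := p0.2 with hMdef
    have hN : 0 < N := hp0one
    have hBgens : ∀ g ∈ gens, wbd M N 0 (Δ (C g)) := by
      intro g hg j t h
      by_contra hne
      rcases Nat.eq_zero_or_pos j with rfl | hj
      · rw [qc_zero Δ hΔ] at hne
        have ht0 : t ≠ 0 := by rintro rfl; omega
        exact hne (by rw [coeff_C, if_neg ht0])
      · have hmem := hPBmem j t hj ⟨g, hg, hne⟩
        have hle := hp0max _ hmem
        have hfin := rat_le_nat hj hN hle
        simp only at hfin
        omega
    have hBall := hclosure M N (fun g hg => hBgens g (Finset.mem_insert_of_mem hg))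
    have hXB : wbd M N N (Δ X) := by
      intro l t h
      by_contra hne
      rcases Nat.eq_zero_or_pos l with rfl | hl
      · rw [qc_zero Δ hΔ X] at hne
        have ht0 : t = 1 := by
          by_contra ht
          exact hne (by rw [coeff_X, if_neg (fun hh => ht hh.symm)])
        subst ht0
        omega
      · have hmem := hPXmem l t hl hne
        have hle := hc _ hmem
        have hfin := ratX_le_nat hl hN hle
        simp only at hfin
        omega
    have hccne : cc Δ M N g0 N ≠ 0 := by
      simp only [cc, extc]
      rw [if_pos ⟨M, by ring⟩]
      have hq : (0 + M * N) / N = M := by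
        rw [show 0 + M * N = N * M by ring, Nat.mul_div_cancel_left _ hN]
      rw [hq]
      exact hg0ne
    have hexp := dstar_exp hΔ hN hBall hXB
    have htriv := hrig _ hexp g0
    apply hccne
    have h2 := congrArg (fun p : B[X] => p.coeff N) htriv
    rw [dstar_apply, ds_coeff, coeff_C, if_neg (by omega)] at h2
    exact h2

end Hard

section EasyMaps
variable {k : Type} [Field k] {B : Type} [CommRing B] [Algebra k B]

/-- The translation exponential map on `B[X]`. -/
noncomputable def transl : B[X] →ₐ[k] (B[X])[X] :=
  { toRingHom := Polynomial.eval₂RingHom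
      ((C : B[X] →+* B[X][X]).comp (C : B →+* B[X])) (C X + X)
    commutes' := fun c => by
      simp only [RingHom.toMonoidHom_eq_coe, OneHom.toFun_eq_coe, MonoidHom.toOneHom_coe,
        MonoidHom.coe_coe, coe_eval₂RingHom]
      rw [Polynomial.algebraMap_apply, eval₂_C, RingHom.comp_apply]
      rw [show (algebraMap k (B[X][X])) c = C (C (algebraMap k B c)) by
        rw [Polynomial.algebraMap_apply, Polynomial.algebraMap_apply]] }

lemma transl_apply (p : B[X]) :
    (transl (k := k)) p
      = p.eval₂ ((C : B[X] →+* B[X][X]).comp (C : B →+* B[X])) (C X + X) := rfl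

lemma transl_C (a : B) : (transl (k := k)) (C a) = C (C a) := by
  rw [transl_apply, eval₂_C, RingHom.comp_apply]

lemma transl_X : (transl (k := k) (B := B)) X = C X + X := by
  rw [transl_apply, eval₂_X]

lemma transl_exp : IsExpMap k (B[X]) (transl (k := k) (B := B)) := by
  constructor
  · intro p
    have hhom : (evalRingHom (0 : B[X])).comp (transl (k := k) (B := B)).toRingHom
        = RingHom.id B[X] := by
      apply ringHom_ext
      · intro a
        simp only [RingHom.comp_apply, RingHom.id_apply, coe_evalRingHom,
          AlgHom.toRingHom_eq_coe, RingHom.coe_coe]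
        rw [transl_C, eval_C]
      · simp only [RingHom.comp_apply, RingHom.id_apply, coe_evalRingHom,
          AlgHom.toRingHom_eq_coe, RingHom.coe_coe]
        rw [transl_X, eval_add, eval_C, eval_X, add_zero]
    have h2 := RingHom.congr_fun hhom p
    simpa using h2
  · intro p
    have hhom : (mapRingHom (transl (k := k) (B := B)).toRingHom).comp
          (transl (k := k) (B := B)).toRingHom
        = (eval₂RingHom (R := B[X]) (S := B[X][X][X]) ((C : B[X][X] →+* B[X][X][X]).comp (C : B[X] →+* B[X][X]))
            (C X + X)).comp (transl (k := k) (B := B)).toRingHom := by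
      apply ringHom_ext
      · intro a
        simp only [RingHom.comp_apply, AlgHom.toRingHom_eq_coe, RingHom.coe_coe,
          coe_mapRingHom, coe_eval₂RingHom]
        rw [transl_C, map_C, eval₂_C, RingHom.comp_apply]
        congr 1
        exact transl_C (k := k) a
      · simp only [RingHom.comp_apply, AlgHom.toRingHom_eq_coe, RingHom.coe_coe,
          coe_mapRingHom, coe_eval₂RingHom]
        rw [transl_X, Polynomial.map_add, map_C, map_X, eval₂_add, eval₂_C, eval₂_X,
          RingHom.comp_apply]
        calc C ((transl (k := k) (B := B)) X) + X
            = C (C X + X) + X := by rw [transl_X]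
          _ = C (C X) + (C X + X) := by rw [C_add]; ring
    have h2 := RingHom.congr_fun hhom p
    simpa using h2

lemma transl_inv_range {p : B[X]} (h : (transl (k := k)) p = C p) :
    p ∈ (CAlgHom : B →ₐ[k] B[X]).range := by
  have h2 := congrArg (mapRingHom (evalRingHom (0 : B))) h
  rw [transl_apply, hom_eval₂] at h2
  have hcomp : (mapRingHom (evalRingHom (0 : B))).comp
      ((C : B[X] →+* B[X][X]).comp (C : B →+* B[X])) = (C : B →+* B[X]) := by
    apply RingHom.ext
    intro a
    simp
  have hval : (mapRingHom (evalRingHom (0 : B))) (C X + X) = X := by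
    simp
  rw [hcomp, hval] at h2
  have hCp : (mapRingHom (evalRingHom (0 : B))) (C p) = C (p.eval 0) := by
    simp
  rw [hCp] at h2
  have hself : p.eval₂ (C : B →+* B[X]) X = p := by
    rw [eval₂_eq_sum, sum_C_mul_X_pow_eq]
  rw [hself] at h2
  exact ⟨p.eval 0, by simpa using h2.symm⟩

end EasyMaps

section ExtMap
variable {k : Type} [Field k] {B : Type} [CommRing B] [Algebra k B]

/-- Extension of an exponential map on `B` to `B[X]`, fixing `X`. -/
noncomputable def extmap (δ : B →ₐ[k] B[X]) : B[X] →ₐ[k] (B[X])[X] :=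
  { toRingHom := Polynomial.eval₂RingHom
      ((mapRingHom (C : B →+* B[X])).comp (δ : B →+* B[X])) ((C X : B[X][X]))
    commutes' := fun c => by
      simp only [RingHom.toMonoidHom_eq_coe, OneHom.toFun_eq_coe, MonoidHom.toOneHom_coe,
        MonoidHom.coe_coe, coe_eval₂RingHom]
      rw [Polynomial.algebraMap_apply, eval₂_C, RingHom.comp_apply]
      have h1 : (δ : B →+* B[X]) (algebraMap k B c) = algebraMap k B[X] c := δ.commutes c
      rw [h1, Polynomial.algebraMap_apply, coe_mapRingHom, map_C]
      rw [show (algebraMap k (B[X][X])) c = C (C (algebraMap k B c)) by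
        rw [Polynomial.algebraMap_apply, Polynomial.algebraMap_apply]] }

lemma extmap_apply (δ : B →ₐ[k] B[X]) (p : B[X]) :
    extmap δ p = p.eval₂ ((mapRingHom (C : B →+* B[X])).comp (δ : B →+* B[X]))
      ((C X : B[X][X])) := rfl

lemma extmap_C (δ : B →ₐ[k] B[X]) (b : B) :
    extmap δ (C b) = (δ b).map (C : B →+* B[X]) := by
  rw [extmap_apply, eval₂_C, RingHom.comp_apply, coe_mapRingHom]
  rfl

lemma extmap_X (δ : B →ₐ[k] B[X]) : extmap δ (X : B[X]) = C X := by
  rw [extmap_apply, eval₂_X]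

lemma extmap_exp (δ : B →ₐ[k] B[X]) (hδ : IsExpMap k B δ) :
    IsExpMap k (B[X]) (extmap δ) := by
  constructor
  · intro p
    have hhom : (evalRingHom (0 : B[X])).comp (extmap δ).toRingHom = RingHom.id B[X] := by
      apply ringHom_ext
      · intro a
        simp only [RingHom.comp_apply, RingHom.id_apply, coe_evalRingHom,
          AlgHom.toRingHom_eq_coe, RingHom.coe_coe]
        rw [extmap_C, eval_map, eval₂_at_zero, coeff_zero_eq_eval_zero, hδ.1 a]
      · simp only [RingHom.comp_apply, RingHom.id_apply, coe_evalRingHom,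
          AlgHom.toRingHom_eq_coe, RingHom.coe_coe]
        rw [extmap_X, eval_C]
    have h2 := RingHom.congr_fun hhom p
    simpa using h2
  · intro p
    have hhom : (mapRingHom (extmap δ).toRingHom).comp (extmap δ).toRingHom
        = (eval₂RingHom (R := B[X]) (S := B[X][X][X]) ((C : B[X][X] →+* B[X][X][X]).comp (C : B[X] →+* B[X][X]))
            (C X + X)).comp (extmap δ).toRingHom := by
      apply ringHom_ext
      · intro b
        simp only [RingHom.comp_apply, AlgHom.toRingHom_eq_coe, RingHom.coe_coe,
          coe_mapRingHom, coe_eval₂RingHom]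
        rw [extmap_C, map_map, eval₂_map]
        have h := congrArg (mapRingHom (mapRingHom (C : B →+* B[X]))) (hδ.2 b)
        rw [hom_eval₂] at h
        simp only [coe_mapRingHom] at h
        rw [map_map] at h
        have e1 : (mapRingHom (C : B →+* B[X])).comp δ.toRingHom
            = (extmap δ).toRingHom.comp (C : B →+* B[X]) := by
          apply RingHom.ext
          intro b'
          simp only [RingHom.comp_apply, AlgHom.toRingHom_eq_coe, RingHom.coe_coe,
            coe_mapRingHom]
          exact (extmap_C δ b').symm
        rw [e1] at h
        have e2 : (mapRingHom (mapRingHom (C : B →+* B[X]))).comp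
              ((C : B[X] →+* B[X][X]).comp (C : B →+* B[X]))
            = ((C : B[X][X] →+* B[X][X][X]).comp
                (C : B[X] →+* B[X][X])).comp (C : B →+* B[X]) := by
          apply RingHom.ext
          intro b'
          simp only [RingHom.comp_apply, coe_mapRingHom, map_C]
        have e3 : Polynomial.map (mapRingHom (C : B →+* B[X])) ((C X + X : B[X][X]))
            = (C X + X : B[X][X][X]) := by
          simp only [Polynomial.map_add, map_C, map_X, coe_mapRingHom]
        rw [e2, e3] at h
        exact h
      · simp only [RingHom.comp_apply, AlgHom.toRingHom_eq_coe, RingHom.coe_coe,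
          coe_mapRingHom, coe_eval₂RingHom]
        rw [extmap_X, map_C, eval₂_C, RingHom.comp_apply]
        congr 1
        exact extmap_X δ
    have h2 := RingHom.congr_fun hhom p
    simpa using h2

lemma rigid_of_ML (hML : ML k B[X] = (CAlgHom : B →ₐ[k] B[X]).range) :
    IsRigid k B := by
  intro δ hδ b
  have hmem : (C b : B[X]) ∈ ML k B[X] := by
    rw [hML]
    exact ⟨b, rfl⟩
  have hle : ML k B[X] ≤ expInv k B[X] (extmap δ) :=
    iInf₂_le (extmap δ) (extmap_exp δ hδ)
  have heq : extmap δ (C b) = CAlgHom (C b) := hle hmem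
  rw [extmap_C] at heq
  have h2 : (δ b).map (C : B →+* B[X]) = (C b : B[X]).map (C : B →+* B[X]) := by
    rw [heq, map_C]
    rfl
  exact Polynomial.map_injective _ C_injective h2

end ExtMap

end SemiRigidAux

theorem semi_rigidity (hfg : Algebra.FiniteType k B ∨ Algebra.FiniteType ℤ B) :
    IsRigid k B ↔ ML k B[X] = (CAlgHom : B →ₐ[k] B[X]).range := by
  constructor
  · intro hrig
    apply le_antisymm
    · refine le_trans (iInf₂_le (SemiRigidAux.transl (k := k) (B := B))
        SemiRigidAux.transl_exp) ?_
      intro p hp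
      have hp2 : SemiRigidAux.transl (k := k) p = CAlgHom p := hp
      have hp3 : SemiRigidAux.transl (k := k) p = C p := by rw [hp2]; rfl
      exact SemiRigidAux.transl_inv_range hp3
    · apply le_iInf₂
      intro Δ hΔ
      rintro x hx
      obtain ⟨b, rfl⟩ := (AlgHom.mem_range _).mp hx
      show Δ (CAlgHom b) = CAlgHom (CAlgHom b)
      exact SemiRigidAux.hard_invariance Δ hfg hrig hΔ b
  · exact SemiRigidAux.rigid_of_ML
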